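/- Let H be a separable infinite-dimensional complex Hilbert space and let {e_{ij}}_{i,j∈ℕ} be a system of matrix units for B(H) (so e_{ij}* = e_{ji}, e_{ij}e_{kl} = δ_{jk} e_{il}, and the e_{ii} are orthogonal rank-one projections summing strongly to the identity). Suppose a = Σ_i α_i e_{ii} is a bounded diagonal self-adjoint operator with α_i ≠ α_j for all i ≠ j, and b ∈ B(H) is a self-adjoint operator whose matrix entries β_{i,i+1} = ⟨b e_{i+1,i+1} ξ_{i+1}, ξ_i⟩ on the first superdiagonal are all nonzero. Then the operator y = a + i b is irreducible, i.e., the only orthogonal projections p ∈ B(H) commuting with y are 0 and the identity. -/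

import Mathlib

open ContinuousLinearMap
open scoped InnerProductSpace

noncomputable section

/-- An orthogonal projection on a Hilbert space. -/
def IsProjection {H : Type} [NormedAddCommGroup H] [InnerProductSpace ℂ H]
    [CompleteSpace H] (p : H →L[ℂ] H) : Prop :=
  IsSelfAdjoint p ∧ p * p = p

/-- If `a = Σ α_i e_{ii}` is diagonal self-adjoint with pairwise distinct
diagonal entries with respect to a system of rank-one matrix units `e_{ij}` built on an
orthonormal basis `ξ`, and `b` is self-adjoint with all first-superdiagonal matrix
entries nonzero, then `y = a + i b` is irreducible: the only orthogonal projections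
commuting with `y` are `0` and `1`. -/
theorem diagonal_plus_superdiagonal_irreducible
    {H : Type} [NormedAddCommGroup H] [InnerProductSpace ℂ H] [CompleteSpace H]
    [TopologicalSpace.SeparableSpace H] (hinf : ¬ FiniteDimensional ℂ H)
    (e : ℕ → ℕ → H →L[ℂ] H)
    (hstar : ∀ i j, star (e i j) = e j i)
    (hmul : ∀ i j k l, e i j * e k l = if j = k then e i l else 0)
    (ξ : ℕ → H) (hnorm : ∀ i, ‖ξ i‖ = 1)
    (hrank1 : ∀ i (v : H), e i i v = (inner ℂ (ξ i) v : ℂ) • ξ i)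
    (hsum : ∀ v : H, HasSum (fun i => e i i v) v)
    (α : ℕ → ℝ) (hα : Function.Injective α)
    (a : H →L[ℂ] H)
    (ha : ∀ v : H, HasSum (fun i => (α i : ℂ) • e i i v) (a v))
    (b : H →L[ℂ] H) (hb : IsSelfAdjoint b)
    (hsuper : ∀ i, (inner ℂ (ξ i) (b (ξ (i + 1))) : ℂ) ≠ 0) :
    ∀ p : H →L[ℂ] H, IsProjection p →
      p * (a + Complex.I • b) = (a + Complex.I • b) * p → p = 0 ∨ p = 1 := by
  intro p hp hcomm
  obtain ⟨hpsa, hp2⟩ := hp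
  -- orthonormality of ξ
  have horth : ∀ i j : ℕ, (inner ℂ (ξ i) (ξ j) : ℂ) = if i = j then 1 else 0 := by
    intro i j
    by_cases h : i = j
    · subst h
      simp [inner_self_eq_norm_sq_to_K (𝕜 := ℂ) (ξ i), hnorm i]
    · have h0 : e i i * e j j = 0 := by rw [hmul]; simp [h]
      have hξj : e j j (ξ j) = ξ j := by
        rw [hrank1]
        simp [inner_self_eq_norm_sq_to_K (𝕜 := ℂ) (ξ j), hnorm j]
      have : e i i (ξ j) = 0 := by
        have := congrArg (fun T : H →L[ℂ] H => T (ξ j)) h0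
        simpa [ContinuousLinearMap.mul_apply, hξj] using this
      rw [hrank1] at this
      have hξne : ξ i ≠ 0 := by
        intro h'; have := hnorm i; rw [h'] at this; simp at this
      have := smul_eq_zero.mp this
      simp only [h, if_false]
      tauto
  have hξne : ∀ i, ξ i ≠ 0 := by
    intro i h'; have := hnorm i; rw [h'] at this; simp at this
  -- action of a on basis vectors
  have haξ : ∀ j, a (ξ j) = (α j : ℂ) • ξ j := by
    intro j
    have h1 := ha (ξ j)
    have h2 : (fun i => (α i : ℂ) • e i i (ξ j))
        = fun i => if i = j then (α j : ℂ) • ξ j else 0 := by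
      funext i
      rw [hrank1, horth]
      by_cases h : i = j <;> simp [h]
    rw [h2] at h1
    exact (hasSum_ite_eq j _).unique h1 |>.symm
  -- matrix entries of a
  have hav : ∀ (i : ℕ) (v : H), (inner ℂ (ξ i) (a v) : ℂ) = (α i : ℂ) * inner ℂ (ξ i) v := by
    intro i v
    have h1 := (innerSL ℂ (ξ i)).hasSum (ha v)
    have h2 : (fun k => (innerSL ℂ (ξ i)) ((α k : ℂ) • e k k v))
        = fun k => if k = i then (α i : ℂ) * inner ℂ (ξ i) v else 0 := by
      funext k
      simp only [innerSL_apply_apply, inner_smul_right, hrank1, inner_smul_right, horth]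
      by_cases h : k = i
      · subst h; simp [mul_comm]
      · have h' : ¬ (i = k) := fun h'' => h h''.symm
        simp [h, h']
    rw [h2] at h1
    exact ((hasSum_ite_eq i _).unique h1).symm
  -- a is self-adjoint
  have hasa : IsSelfAdjoint a := by
    rw [ContinuousLinearMap.isSelfAdjoint_iff_isSymmetric]
    intro u v
    have h1 := (innerSL ℂ v).hasSum (ha u)
    have h2 := ((innerSL ℂ u).hasSum (ha v)).star
    simp only [innerSL_apply_apply] at h1 h2
    have key : ∀ k, ((inner ℂ v ((α k : ℂ) • e k k u) : ℂ))
        = star ((inner ℂ u ((α k : ℂ) • e k k v) : ℂ)) := by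
      intro k
      have hesa : IsSelfAdjoint (e k k) := hstar k k
      have hsym := ContinuousLinearMap.isSelfAdjoint_iff_isSymmetric.mp hesa
      have hesym : ∀ x y : H, (inner ℂ (e k k x) y : ℂ) = inner ℂ x (e k k y) :=
        fun x y => hsym x y
      have : (starRingEnd ℂ) (inner ℂ u (e k k v) : ℂ) = inner ℂ v (e k k u) := by
        rw [← hesym u v, inner_conj_symm]
      simp only [RCLike.star_def, inner_smul_right, map_mul, Complex.conj_ofReal, this]
    have hfun : (fun k => (inner ℂ v ((α k : ℂ) • e k k u) : ℂ))
        = fun k => star ((inner ℂ u ((α k : ℂ) • e k k v) : ℂ)) := funext key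
    rw [hfun] at h1
    have huniq := h1.unique h2
    calc (inner ℂ (a u) v : ℂ) = (starRingEnd ℂ) (inner ℂ v (a u)) := (inner_conj_symm _ _).symm
      _ = (starRingEnd ℂ) (star (inner ℂ u (a v) : ℂ)) := by rw [huniq]
      _ = inner ℂ u (a v) := by simp
  -- p commutes with a and with b
  have hysa : star (a + Complex.I • b) = a - Complex.I • b := by
    rw [star_add, star_smul, hasa.star_eq, hb.star_eq]
    simp [Complex.conj_I, neg_smul, sub_eq_add_neg]
  have hcomm' : p * (a - Complex.I • b) = (a - Complex.I • b) * p := by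
    have := congrArg star hcomm
    rw [star_mul, star_mul, hysa, hpsa.star_eq] at this
    exact this.symm
  have hpa : p * a = a * p := by
    have h : p * ((a + Complex.I • b) + (a - Complex.I • b))
        = ((a + Complex.I • b) + (a - Complex.I • b)) * p := by
      rw [mul_add, add_mul, hcomm, hcomm']
    have h2 : (a + Complex.I • b) + (a - Complex.I • b) = a + a := by abel
    rw [h2, mul_add, add_mul] at h
    have h3 : (2 : ℂ) • (p * a) = (2 : ℂ) • (a * p) := by
      rw [two_smul, two_smul]; exact h
    exact smul_right_injective _ (by norm_num) h3
  have hIb : p * (Complex.I • b) = (Complex.I • b) * p := by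
    have h1 : p * (Complex.I • b) = p * (a + Complex.I • b) - p * a := by
      rw [mul_add]; abel
    rw [h1, hcomm, hpa, add_mul]; abel
  have hpb : p * b = b * p := by
    have h : Complex.I • (p * b) = Complex.I • (b * p) := by
      rw [← mul_smul_comm, ← smul_mul_assoc]; exact hIb
    exact smul_right_injective _ Complex.I_ne_zero h
  -- symmetry of p
  have hpsym' : ∀ x y : H, (inner ℂ (p x) y : ℂ) = inner ℂ x (p y) :=
    fun x y => (ContinuousLinearMap.isSelfAdjoint_iff_isSymmetric.mp hpsa) x y
  -- off-diagonal entries of p vanish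
  have hpdiag : ∀ i j, i ≠ j → (inner ℂ (ξ i) (p (ξ j)) : ℂ) = 0 := by
    intro i j hij
    have h := congrArg (fun T : H →L[ℂ] H => (inner ℂ (ξ i) (T (ξ j)) : ℂ)) hpa
    simp only [ContinuousLinearMap.mul_apply] at h
    rw [haξ j, map_smul, inner_smul_right, hav i (p (ξ j))] at h
    have hαne : (α j : ℂ) ≠ (α i : ℂ) := by
      intro h'
      exact hij (hα (by exact_mod_cast h')).symm
    have hz : ((α j : ℂ) - (α i : ℂ)) * inner ℂ (ξ i) (p (ξ j)) = 0 := by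
      linear_combination h
    rcases mul_eq_zero.mp hz with h' | h'
    · exact absurd (sub_eq_zero.mp h') hαne
    · exact h'
  -- p is diagonal
  set c : ℕ → ℂ := fun j => (inner ℂ (ξ j) (p (ξ j)) : ℂ) with hc
  have hpξ : ∀ j, p (ξ j) = c j • ξ j := by
    intro j
    have h1 := hsum (p (ξ j))
    have h2 : (fun i => e i i (p (ξ j))) = fun i => if i = j then c j • ξ j else 0 := by
      funext i
      rw [hrank1]
      by_cases h : i = j
      · subst h; simp [hc]
      · rw [hpdiag i j h]; simp [h]
    rw [h2] at h1
    exact (hasSum_ite_eq j _).unique h1 |>.symm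
  -- c j ∈ {0, 1}
  have hcidem : ∀ j, c j * c j = c j := by
    intro j
    have h := congrArg (fun T : H →L[ℂ] H => T (ξ j)) hp2
    simp only [ContinuousLinearMap.mul_apply, hpξ, map_smul, smul_smul] at h
    exact smul_left_injective ℂ (hξne j) h
  have hc01 : ∀ j, c j = 0 ∨ c j = 1 := by
    intro j
    have h := hcidem j
    rcases mul_eq_zero.mp (by linear_combination h : c j * (c j - 1) = 0) with h' | h'
    · exact Or.inl h'
    · exact Or.inr (sub_eq_zero.mp h')
  have hcconj : ∀ j, starRingEnd ℂ (c j) = c j := by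
    intro j
    rcases hc01 j with h | h <;> rw [h] <;> simp
  -- c is constant via b-commutation
  have hcstep : ∀ i, c i = c (i + 1) := by
    intro i
    have h := congrArg (fun T : H →L[ℂ] H => (inner ℂ (ξ i) (T (ξ (i+1))) : ℂ)) hpb
    simp only [ContinuousLinearMap.mul_apply] at h
    rw [hpξ (i+1), map_smul, inner_smul_right] at h
    have hl : (inner ℂ (ξ i) (p (b (ξ (i+1)))) : ℂ)
        = c i * inner ℂ (ξ i) (b (ξ (i+1))) := by
      rw [← hpsym' (ξ i) (b (ξ (i+1))), hpξ i, inner_smul_left, hcconj]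
    rw [hl] at h
    exact mul_right_cancel₀ (hsuper i) h
  have hcconst : ∀ j, c j = c 0 := by
    intro j
    induction j with
    | zero => rfl
    | succ n ih => rw [← hcstep n]; exact ih
  -- conclude
  rcases hc01 0 with h0 | h0
  · left
    ext v
    have h1 := hsum (p v)
    have h2 : (fun i => e i i (p v)) = fun _ => (0 : H) := by
      funext i
      rw [hrank1, ← hpsym' (ξ i) v, hpξ i, hcconst i, h0]
      simp
    rw [h2] at h1
    have := hasSum_zero.unique h1
    simpa using this.symm
  · right
    ext v
    have h1 := hsum (p v)
    have h2 : (fun i => e i i (p v)) = fun i => e i i v := by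
      funext i
      rw [hrank1, hrank1, ← hpsym' (ξ i) v, hpξ i, hcconst i, h0]
      simp
    rw [h2] at h1
    have := (hsum v).unique h1
    simpa using this.symm
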